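/- If V, V' ⊂ R^{n,n} are non-degenerate subspaces with the same signature, there exists an isometry f ∈ O(R^{n,n}) with fV = V' such that fΓ is V'-rational for every V-rational Narain lattice Γ. -/

import Mathlib

open Module LinearMap Submodule

section Aux

variable {E : Type*} [AddCommGroup E] [Module ℝ E] [FiniteDimensional ℝ E]

/-- An orthogonal basis with diagonal ±1 for a nondegenerate symmetric real bilinear form. -/
lemma aux_exists_pm_basis (B : LinearMap.BilinForm ℝ E) (hs : B.IsSymm)
    (hnd : B.Nondegenerate) :
    ∃ v : Basis (Fin (finrank ℝ E)) ℝ E, B.IsOrthoᵢ v ∧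
      ∀ i, B (v i) (v i) = 1 ∨ B (v i) (v i) = -1 := by
  obtain ⟨v, hv⟩ := LinearMap.BilinForm.exists_orthogonal_basis (LinearMap.BilinForm.isSymm_iff.1 hs)
  have hne : ∀ i, B (v i) (v i) ≠ 0 :=
    LinearMap.BilinForm.iIsOrtho.not_isOrtho_basis_self_of_nondegenerate hv hnd
  have hpos : ∀ i, (0:ℝ) < Real.sqrt |B (v i) (v i)| := fun i =>
    Real.sqrt_pos.2 (abs_pos.2 (hne i))
  set u : Fin (finrank ℝ E) → ℝˣ := fun i =>
    Units.mk0 ((Real.sqrt |B (v i) (v i)|)⁻¹) (inv_ne_zero (hpos i).ne')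
  have key : ∀ (c c' : ℝ) (x y : E), B (c • x) (c' • y) = c * (c' * B x y) := by
    intro c c' x y
    simp only [map_smul, LinearMap.smul_apply, smul_eq_mul]; ring
  refine ⟨v.unitsSMul u, ?_, ?_⟩
  · intro i j hij
    have h0 := hv hij
    show B _ _ = 0
    rw [Basis.unitsSMul_apply, Basis.unitsSMul_apply, Units.smul_def, Units.smul_def, key, h0]
    ring
  · intro i
    have hsq : (Real.sqrt |B (v i) (v i)|)⁻¹ * ((Real.sqrt |B (v i) (v i)|)⁻¹ * B (v i) (v i))
        = B (v i) (v i) / |B (v i) (v i)| := by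
      rw [← mul_assoc, ← mul_inv]
      rw [Real.mul_self_sqrt (abs_nonneg _)]
      ring
    rw [Basis.unitsSMul_apply, Units.smul_def, key]
    simp only [u, Units.val_mk0]
    rw [hsq]
    rcases le_or_gt 0 (B (v i) (v i)) with h | h
    · left; rw [abs_of_nonneg h, div_self (hne i)]
    · right; rw [abs_of_neg h, div_neg, div_self (hne i)]

/-- Diagonal formula for `B x x` in an orthogonal basis. -/
lemma aux_diag {ι : Type*} [Fintype ι] (B : LinearMap.BilinForm ℝ E) (v : Basis ι ℝ E)
    (hv : B.IsOrthoᵢ v) (x : E) :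
    B x x = ∑ i, (v.repr x i) * (v.repr x i) * B (v i) (v i) := by
  classical
  conv_lhs => rw [← v.sum_repr x]
  simp only [map_sum, LinearMap.sum_apply, map_smul, LinearMap.smul_apply, smul_eq_mul]
  refine Finset.sum_congr rfl fun i _ => ?_
  rw [Finset.sum_eq_single i]
  · ring
  · intro j _ hji
    rw [hv hji]
    ring
  · intro h; exact absurd (Finset.mem_univ i) h

lemma aux_card_split {ι : Type*} [Fintype ι] (d : ι → ℝ) (hd : ∀ i, d i = 1 ∨ d i = -1) :
    Nat.card {i // d i = 1} + Nat.card {i // d i = -1} = Nat.card ι := by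
  classical
  rw [← Nat.card_sum]
  apply Nat.card_congr
  refine (Equiv.sumCongr (Equiv.refl _) (Equiv.subtypeEquivRight fun i => ?_)).trans
    (Equiv.sumCompl fun i => d i = 1)
  rcases hd i with h | h <;> simp [h] <;> norm_num

/-- One half of Sylvester's uniqueness: the number of `+1`s can only grow. -/
lemma aux_sylvester_le {ι ι' : Type*} [Fintype ι] [Fintype ι'] (B : LinearMap.BilinForm ℝ E)
    (v : Basis ι ℝ E) (w : Basis ι' ℝ E) (hv : B.IsOrthoᵢ v) (hw : B.IsOrthoᵢ w)
    (hv1 : ∀ i, B (v i) (v i) = 1 ∨ B (v i) (v i) = -1)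
    (hw1 : ∀ j, B (w j) (w j) = 1 ∨ B (w j) (w j) = -1) :
    Nat.card {i // B (v i) (v i) = 1} ≤ Nat.card {j // B (w j) (w j) = 1} := by
  classical
  set S : Set ι := {i | B (v i) (v i) = 1} with hS
  set T : Set ι' := {j | B (w j) (w j) = -1} with hT
  set P : Submodule ℝ E := Submodule.span ℝ (v '' S) with hPdef
  set N : Submodule ℝ E := Submodule.span ℝ (w '' T) with hNdef
  have hP : ∀ x ∈ P, 0 ≤ B x x ∧ (B x x = 0 → x = 0) := by
    intro x hx
    have hsupp : ↑(v.repr x).support ⊆ S := v.mem_span_image.1 hx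
    have hterm : ∀ i, (v.repr x i) * (v.repr x i) * B (v i) (v i) = (v.repr x i) ^ 2 := by
      intro i
      by_cases hi : i ∈ (v.repr x).support
      · have h1 : B (v i) (v i) = 1 := hsupp hi
        rw [h1]; ring
      · rw [Finsupp.notMem_support_iff.1 hi]; ring
    rw [aux_diag B v hv x]
    simp_rw [hterm]
    refine ⟨Finset.sum_nonneg fun i _ => sq_nonneg _, fun h0 => ?_⟩
    have hz : ∀ i ∈ Finset.univ, (v.repr x i) ^ 2 = 0 :=
      (Finset.sum_eq_zero_iff_of_nonneg fun i _ => sq_nonneg _).1 h0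
    have hr : v.repr x = 0 := by
      ext i
      exact pow_eq_zero_iff (two_ne_zero) |>.1 (hz i (Finset.mem_univ i))
    simpa using congrArg v.repr.symm hr
  have hN : ∀ x ∈ N, B x x ≤ 0 := by
    intro x hx
    have hsupp : ↑(w.repr x).support ⊆ T := w.mem_span_image.1 hx
    have hterm : ∀ j, (w.repr x j) * (w.repr x j) * B (w j) (w j) = -((w.repr x j) ^ 2) := by
      intro j
      by_cases hj : j ∈ (w.repr x).support
      · have h1 : B (w j) (w j) = -1 := hsupp hj
        rw [h1]; ring
      · rw [Finsupp.notMem_support_iff.1 hj]; ring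
    rw [aux_diag B w hw x]
    simp_rw [hterm]
    exact Finset.sum_nonpos fun j _ => neg_nonpos.2 (sq_nonneg _)
  have hdisj : Disjoint P N := by
    rw [Submodule.disjoint_def]
    intro x hxP hxN
    exact (hP x hxP).2 (le_antisymm (hN x hxN) (hP x hxP).1)
  have hdimP : finrank ℝ P = Nat.card S := by
    have hli : LinearIndependent ℝ (fun i : S => v i) :=
      v.linearIndependent.comp _ Subtype.val_injective
    rw [Nat.card_eq_fintype_card, hPdef, show (⇑v '' S) = Set.range (fun i : S => v i) from
      Set.image_eq_range _ _]
    exact finrank_span_eq_card hli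
  have hdimN : finrank ℝ N = Nat.card T := by
    have hli : LinearIndependent ℝ (fun j : T => w j) :=
      w.linearIndependent.comp _ Subtype.val_injective
    rw [Nat.card_eq_fintype_card, hNdef, show (⇑w '' T) = Set.range (fun j : T => w j) from
      Set.image_eq_range _ _]
    exact finrank_span_eq_card hli
  have hPN : finrank ℝ P + finrank ℝ N ≤ finrank ℝ E := by
    calc finrank ℝ P + finrank ℝ N
        = finrank ℝ ↥(P ⊔ N) + finrank ℝ ↥(P ⊓ N) :=
          (Submodule.finrank_sup_add_finrank_inf_eq P N).symm
      _ = finrank ℝ ↥(P ⊔ N) := by rw [hdisj.eq_bot]; simp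
      _ ≤ finrank ℝ E := Submodule.finrank_le _
  have hE : finrank ℝ E = Nat.card ι' := by
    rw [Nat.card_eq_fintype_card]; exact finrank_eq_card_basis w
  have hsplit : Nat.card {j // B (w j) (w j) = 1} + Nat.card {j // B (w j) (w j) = -1}
      = Nat.card ι' := aux_card_split (fun j => B (w j) (w j)) hw1
  have h1 : Nat.card ↥S = Nat.card {i // B (v i) (v i) = 1} := rfl
  have h2 : Nat.card ↥T = Nat.card {j // B (w j) (w j) = -1} := rfl
  omega

/-- Sylvester's uniqueness of the signature. -/
lemma aux_sylvester_eq {ι ι' : Type*} [Fintype ι] [Fintype ι'] (B : LinearMap.BilinForm ℝ E)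
    (v : Basis ι ℝ E) (w : Basis ι' ℝ E) (hv : B.IsOrthoᵢ v) (hw : B.IsOrthoᵢ w)
    (hv1 : ∀ i, B (v i) (v i) = 1 ∨ B (v i) (v i) = -1)
    (hw1 : ∀ j, B (w j) (w j) = 1 ∨ B (w j) (w j) = -1) :
    Nat.card {i // B (v i) (v i) = 1} = Nat.card {j // B (w j) (w j) = 1} :=
  le_antisymm (aux_sylvester_le B v w hv hw hv1 hw1) (aux_sylvester_le B w v hw hv hw1 hv1)

lemma aux_card_subtype_sum {α β : Type*} [Fintype α] [Fintype β] (p : α ⊕ β → Prop) :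
    Nat.card {x : α ⊕ β // p x}
      = Nat.card {a // p (Sum.inl a)} + Nat.card {b // p (Sum.inr b)} := by
  rw [← Nat.card_sum]
  exact Nat.card_congr Equiv.subtypeSum

/-- Matching sign patterns can be realised by a bijection. -/
lemma aux_exists_sign_equiv {ι ι' : Type*} [Fintype ι] [Fintype ι'] (d : ι → ℝ) (d' : ι' → ℝ)
    (hd : ∀ i, d i = 1 ∨ d i = -1) (hd' : ∀ j, d' j = 1 ∨ d' j = -1)
    (h1 : Nat.card {i // d i = 1} = Nat.card {j // d' j = 1})
    (hc : Nat.card ι = Nat.card ι') :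
    ∃ σ : ι ≃ ι', ∀ i, d' (σ i) = d i := by
  classical
  have hsplit := aux_card_split d hd
  have hsplit' := aux_card_split d' hd'
  have h2 : Nat.card {i // d i = -1} = Nat.card {j // d' j = -1} := by omega
  have e1 : {i // d i = 1} ≃ {j // d' j = 1} := by
    apply Fintype.equivOfCardEq
    simpa [Nat.card_eq_fintype_card] using h1
  have e2 : {i // d i = -1} ≃ {j // d' j = -1} := by
    apply Fintype.equivOfCardEq
    simpa [Nat.card_eq_fintype_card] using h2
  have hiff : ∀ i, ¬ d i = 1 ↔ d i = -1 := by
    intro i; rcases hd i with h | h <;> simp [h] <;> norm_num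
  have hiff' : ∀ j, ¬ d' j = 1 ↔ d' j = -1 := by
    intro j; rcases hd' j with h | h <;> simp [h] <;> norm_num
  have e2' : {i // ¬ d i = 1} ≃ {j // ¬ d' j = 1} :=
    ((Equiv.subtypeEquivRight hiff).trans e2).trans (Equiv.subtypeEquivRight hiff').symm
  refine ⟨((Equiv.sumCompl fun i => d i = 1).symm.trans
    ((e1.sumCongr e2').trans (Equiv.sumCompl fun j => d' j = 1))), fun i => ?_⟩
  by_cases h : d i = 1
  · rw [Equiv.trans_apply, Equiv.trans_apply, Equiv.sumCompl_symm_apply_of_pos (p := fun i => d i = 1) h]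
    simp only [Equiv.sumCongr_apply, Sum.map_inl, Equiv.sumCompl_apply_inl]
    rw [(e1 ⟨i, h⟩).2, h]
  · rw [Equiv.trans_apply, Equiv.trans_apply, Equiv.sumCompl_symm_apply_of_neg (p := fun i => d i = 1) h]
    simp only [Equiv.sumCongr_apply, Sum.map_inr, Equiv.sumCompl_apply_inr]
    have := (e2' ⟨i, h⟩).2
    rw [(hiff' _).1 this, (hiff i).1 h]

end Aux
/-- A Narain lattice in `ℝ^{n,n}`: an even unimodular ℤ-lattice of full rank `2n`. -/
def IsNarain (n : ℕ) (B : LinearMap.BilinForm ℝ ((Fin n → ℝ) × (Fin n → ℝ)))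
    (Γ : Submodule ℤ ((Fin n → ℝ) × (Fin n → ℝ))) : Prop :=
  Submodule.span ℝ (Γ : Set ((Fin n → ℝ) × (Fin n → ℝ))) = ⊤ ∧
  (∀ x ∈ Γ, ∀ y ∈ Γ, ∃ k : ℤ, B x y = (k : ℝ)) ∧
  (∀ x ∈ Γ, ∃ k : ℤ, B x x = 2 * (k : ℝ)) ∧
  ∃ bb : Basis (Fin (2 * n)) ℤ ↥Γ,
    (Matrix.det (Matrix.of fun i j => B (bb i) (bb j))) ^ 2 = 1

set_option maxHeartbeats 2000000 in
/-- If `V, V' ⊂ ℝ^{n,n}` are non-degenerate subspaces of the same signature (expressed as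
the existence of a linear isometry between them), then there is an isometry
`f ∈ O(ℝ^{n,n})` with `f V = V'` such that `f Γ` is `V'`-rational for every `V`-rational
Narain lattice `Γ`. -/
theorem stmt3 (n : ℕ) (B : LinearMap.BilinForm ℝ ((Fin n → ℝ) × (Fin n → ℝ)))
    (hB : ∀ x y : (Fin n → ℝ) × (Fin n → ℝ),
      B x y = ∑ i, x.1 i * y.1 i - ∑ i, x.2 i * y.2 i)
    (V V' : Submodule ℝ ((Fin n → ℝ) × (Fin n → ℝ)))
    (hVnd : ∀ v ∈ V, (∀ w ∈ V, B v w = 0) → v = 0)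
    (hV'nd : ∀ v ∈ V', (∀ w ∈ V', B v w = 0) → v = 0)
    (hsig : ∃ e : ↥V ≃ₗ[ℝ] ↥V', ∀ v w : ↥V, B ↑(e v) ↑(e w) = B ↑v ↑w) :
    ∃ f : ((Fin n → ℝ) × (Fin n → ℝ)) ≃ₗ[ℝ] ((Fin n → ℝ) × (Fin n → ℝ)),
      (∀ x y, B (f x) (f y) = B x y) ∧ V.map f.toLinearMap = V' ∧
      ∀ Γ : Submodule ℤ ((Fin n → ℝ) × (Fin n → ℝ)), IsNarain n B Γ →
        Module.finrank ℤ ↥(Γ ⊓ V.restrictScalars ℤ) = Module.finrank ℝ ↥V →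
        Module.finrank ℤ
            ↥((Γ.map (f.toLinearMap.restrictScalars ℤ)) ⊓ V'.restrictScalars ℤ) =
          Module.finrank ℝ ↥V' := by
  classical
  obtain ⟨e, he⟩ := hsig
  have hsymm : B.IsSymm := by
    constructor
    intro x y
    simp only [RingHom.id_apply, hB]
    congr 1 <;> exact Finset.sum_congr rfl fun i _ => mul_comm _ _
  have hrefl : B.IsRefl := hsymm.isRefl
  have hnd : B.Nondegenerate := by
    refine LinearMap.BilinForm.Nondegenerate.ofSeparatingLeft ?_
    intro x hx
    have h1 := hx (x.1, -x.2)
    rw [hB] at h1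
    have h2 : (∑ i, x.1 i * x.1 i) + ∑ i, x.2 i * x.2 i = 0 := by
      simpa [mul_neg, sub_neg_eq_add] using h1
    have hA : ∑ i, x.1 i * x.1 i = 0 ∧ ∑ i, x.2 i * x.2 i = 0 := by
      constructor <;>
        nlinarith [Finset.sum_nonneg (fun i (_ : i ∈ Finset.univ) => mul_self_nonneg (x.1 i)),
          Finset.sum_nonneg (fun i (_ : i ∈ Finset.univ) => mul_self_nonneg (x.2 i))]
    have hx1 : x.1 = 0 := by
      funext i
      exact mul_self_eq_zero.1
        ((Finset.sum_eq_zero_iff_of_nonneg fun i _ => mul_self_nonneg (x.1 i)).1 hA.1 i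
          (Finset.mem_univ i))
    have hx2 : x.2 = 0 := by
      funext i
      exact mul_self_eq_zero.1
        ((Finset.sum_eq_zero_iff_of_nonneg fun i _ => mul_self_nonneg (x.2 i)).1 hA.2 i
          (Finset.mem_univ i))
    exact Prod.ext hx1 hx2
  -- restricted nondegeneracy
  have hVr : (B.restrict V).Nondegenerate := by
    refine LinearMap.BilinForm.Nondegenerate.ofSeparatingLeft ?_
    intro x hx
    exact Subtype.ext (hVnd x x.2 fun w hw => by simpa using hx ⟨w, hw⟩)
  have hV'r : (B.restrict V').Nondegenerate := by
    refine LinearMap.BilinForm.Nondegenerate.ofSeparatingLeft ?_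
    intro x hx
    exact Subtype.ext (hV'nd x x.2 fun w hw => by simpa using hx ⟨w, hw⟩)
  have hVsymm : (B.restrict V).IsSymm := by
    constructor
    intro x y; exact hsymm.eq x y
  have hV'symm : (B.restrict V').IsSymm := by
    constructor
    intro x y; exact hsymm.eq x y
  have hcompl : IsCompl V (B.orthogonal V) :=
    B.isCompl_orthogonal_of_restrict_nondegenerate hrefl hVr
  have hcompl' : IsCompl V' (B.orthogonal V') :=
    B.isCompl_orthogonal_of_restrict_nondegenerate hrefl hV'r
  have hPr : (B.restrict (B.orthogonal V)).Nondegenerate := by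
    apply B.nondegenerate_restrict_of_disjoint_orthogonal hrefl
    rw [B.orthogonal_orthogonal hnd hrefl]
    exact hcompl.disjoint.symm
  have hP'r : (B.restrict (B.orthogonal V')).Nondegenerate := by
    apply B.nondegenerate_restrict_of_disjoint_orthogonal hrefl
    rw [B.orthogonal_orthogonal hnd hrefl]
    exact hcompl'.disjoint.symm
  have hPsymm : (B.restrict (B.orthogonal V)).IsSymm := by
    constructor
    intro x y; exact hsymm.eq x y
  have hP'symm : (B.restrict (B.orthogonal V')).IsSymm := by
    constructor
    intro x y; exact hsymm.eq x y
  -- diagonal bases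
  obtain ⟨bV, hbVo, hbV1⟩ := aux_exists_pm_basis (B.restrict V) hVsymm hVr
  obtain ⟨bP, hbPo, hbP1⟩ := aux_exists_pm_basis (B.restrict (B.orthogonal V)) hPsymm hPr
  obtain ⟨bV', hbV'o, hbV'1⟩ := aux_exists_pm_basis (B.restrict V') hV'symm hV'r
  obtain ⟨bP', hbP'o, hbP'1⟩ := aux_exists_pm_basis (B.restrict (B.orthogonal V')) hP'symm hP'r
  -- combined bases of the whole space
  let bW := (bV.prod bP).map (Submodule.prodEquivOfIsCompl _ _ hcompl)
  let bW' := (bV'.prod bP').map (Submodule.prodEquivOfIsCompl _ _ hcompl')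
  have hbWl : ∀ i, bW (Sum.inl i) = ↑(bV i) := by
    intro i
    simp [bW, Basis.prod_apply, Submodule.coe_prodEquivOfIsCompl']
  have hbWr : ∀ j, bW (Sum.inr j) = ↑(bP j) := by
    intro j
    simp [bW, Basis.prod_apply, Submodule.coe_prodEquivOfIsCompl']
  have hbW'l : ∀ i, bW' (Sum.inl i) = ↑(bV' i) := by
    intro i
    simp [bW', Basis.prod_apply, Submodule.coe_prodEquivOfIsCompl']
  have hbW'r : ∀ j, bW' (Sum.inr j) = ↑(bP' j) := by
    intro j
    simp [bW', Basis.prod_apply, Submodule.coe_prodEquivOfIsCompl']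
  have hVP : ∀ (x : ↥V) (y : ↥(B.orthogonal V)), B ↑x ↑y = 0 := fun x y => y.2 x x.2
  have hV'P : ∀ (x : ↥V') (y : ↥(B.orthogonal V')), B ↑x ↑y = 0 := fun x y => y.2 x x.2
  have hbWo : B.IsOrthoᵢ bW := by
    intro k l hkl
    rcases k with i | j <;> rcases l with i' | j'
    · show B _ _ = 0
      rw [hbWl, hbWl]
      exact hbVo (fun h => hkl (congrArg Sum.inl h))
    · show B _ _ = 0
      rw [hbWl, hbWr]; exact hVP _ _
    · show B _ _ = 0
      rw [hbWr, hbWl]; exact hrefl _ _ (hVP _ _)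
    · show B _ _ = 0
      rw [hbWr, hbWr]
      exact hbPo (fun h => hkl (congrArg Sum.inr h))
  have hbW'o : B.IsOrthoᵢ bW' := by
    intro k l hkl
    rcases k with i | j <;> rcases l with i' | j'
    · show B _ _ = 0
      rw [hbW'l, hbW'l]
      exact hbV'o (fun h => hkl (congrArg Sum.inl h))
    · show B _ _ = 0
      rw [hbW'l, hbW'r]; exact hV'P _ _
    · show B _ _ = 0
      rw [hbW'r, hbW'l]; exact hrefl _ _ (hV'P _ _)
    · show B _ _ = 0
      rw [hbW'r, hbW'r]
      exact hbP'o (fun h => hkl (congrArg Sum.inr h))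
  have hbW1 : ∀ k, B (bW k) (bW k) = 1 ∨ B (bW k) (bW k) = -1 := by
    intro k
    rcases k with i | j
    · rw [hbWl]; exact hbV1 i
    · rw [hbWr]; exact hbP1 j
  have hbW'1 : ∀ k, B (bW' k) (bW' k) = 1 ∨ B (bW' k) (bW' k) = -1 := by
    intro k
    rcases k with i | j
    · rw [hbW'l]; exact hbV'1 i
    · rw [hbW'r]; exact hbP'1 j
  -- signature bookkeeping
  have h_a : Module.finrank ℝ ↥V = Module.finrank ℝ ↥V' := LinearEquiv.finrank_eq e
  have h_b : Module.finrank ℝ ↥(B.orthogonal V) = Module.finrank ℝ ↥(B.orthogonal V') := by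
    rw [LinearMap.BilinForm.finrank_orthogonal hnd,
      LinearMap.BilinForm.finrank_orthogonal hnd, h_a]
  -- the numbers of +1s on V and V' agree (via the isometry e)
  have hp1 : Nat.card {i // B ↑(bV i) ↑(bV i) = 1} = Nat.card {j // B ↑(bV' j) ↑(bV' j) = 1} := by
    have h0 := aux_sylvester_eq (B.restrict V') (bV.map e) bV'
      (fun i j hij => by
        show (B.restrict V') ((bV.map e) i) ((bV.map e) j) = 0
        rw [Basis.map_apply, Basis.map_apply]
        show B ↑(e (bV i)) ↑(e (bV j)) = 0
        rw [he]
        exact hbVo hij)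
      hbV'o
      (fun i => by
        show (B.restrict V') ((bV.map e) i) ((bV.map e) i) = 1 ∨
          (B.restrict V') ((bV.map e) i) ((bV.map e) i) = -1
        rw [Basis.map_apply]
        show B ↑(e (bV i)) ↑(e (bV i)) = 1 ∨ B ↑(e (bV i)) ↑(e (bV i)) = -1
        rw [he]
        exact hbV1 i)
      hbV'1
    refine Eq.trans (Nat.card_congr (Equiv.subtypeEquivRight fun i => ?_)) h0
    show B ↑(bV i) ↑(bV i) = 1 ↔ (B.restrict V') ((bV.map e) i) ((bV.map e) i) = 1
    rw [Basis.map_apply]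
    show _ ↔ B ↑(e (bV i)) ↑(e (bV i)) = 1
    rw [he]
  -- the numbers of +1s on the whole space agree
  have hpW : Nat.card {k // B (bW k) (bW k) = 1} = Nat.card {k // B (bW' k) (bW' k) = 1} :=
    aux_sylvester_eq B bW bW' hbWo hbW'o hbW1 hbW'1
  have hsplitW := aux_card_subtype_sum (fun k => B (bW k) (bW k) = 1)
  have hsplitW' := aux_card_subtype_sum (fun k => B (bW' k) (bW' k) = 1)
  have hWl : Nat.card {i // B (bW (Sum.inl i)) (bW (Sum.inl i)) = 1}
      = Nat.card {i // B ↑(bV i) ↑(bV i) = 1} :=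
    Nat.card_congr (Equiv.subtypeEquivRight fun i => by rw [hbWl])
  have hWr : Nat.card {j // B (bW (Sum.inr j)) (bW (Sum.inr j)) = 1}
      = Nat.card {j // B ↑(bP j) ↑(bP j) = 1} :=
    Nat.card_congr (Equiv.subtypeEquivRight fun j => by rw [hbWr])
  have hW'l : Nat.card {i // B (bW' (Sum.inl i)) (bW' (Sum.inl i)) = 1}
      = Nat.card {i // B ↑(bV' i) ↑(bV' i) = 1} :=
    Nat.card_congr (Equiv.subtypeEquivRight fun i => by rw [hbW'l])
  have hW'r : Nat.card {j // B (bW' (Sum.inr j)) (bW' (Sum.inr j)) = 1}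
      = Nat.card {j // B ↑(bP' j) ↑(bP' j) = 1} :=
    Nat.card_congr (Equiv.subtypeEquivRight fun j => by rw [hbW'r])
  have hp2 : Nat.card {j // B ↑(bP j) ↑(bP j) = 1}
      = Nat.card {j // B ↑(bP' j) ↑(bP' j) = 1} := by omega
  -- sign-matching bijections
  obtain ⟨σ₁, hσ₁⟩ := aux_exists_sign_equiv (fun i => B ↑(bV i) ↑(bV i))
    (fun j => B ↑(bV' j) ↑(bV' j)) hbV1 hbV'1 hp1
    (by simp [Nat.card_eq_fintype_card, h_a])
  obtain ⟨σ₂, hσ₂⟩ := aux_exists_sign_equiv (fun j => B ↑(bP j) ↑(bP j))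
    (fun j => B ↑(bP' j) ↑(bP' j)) hbP1 hbP'1 hp2
    (by simp [Nat.card_eq_fintype_card, h_b])
  let σ := σ₁.sumCongr σ₂
  let f := bW.equiv bW' σ
  have hfb : ∀ k, f (bW k) = bW' (σ k) := fun k => bW.equiv_apply k bW' σ
  have hσdiag : ∀ k, B (bW' (σ k)) (bW' (σ k)) = B (bW k) (bW k) := by
    intro k
    rcases k with i | j
    · have h1 : σ (Sum.inl i) = Sum.inl (σ₁ i) := rfl
      rw [h1, hbW'l, hbWl]
      exact hσ₁ i
    · have h1 : σ (Sum.inr j) = Sum.inr (σ₂ j) := rfl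
      rw [h1, hbW'r, hbWr]
      exact hσ₂ j
  have hkey : ∀ k l, B (f (bW k)) (f (bW l)) = B (bW k) (bW l) := by
    intro k l
    rw [hfb, hfb]
    by_cases h : k = l
    · subst h; exact hσdiag k
    · rw [show B (bW' (σ k)) (bW' (σ l)) = 0 from hbW'o fun hh => h (σ.injective hh),
        show B (bW k) (bW l) = 0 from hbWo h]
  have hiso : ∀ x y, B (f x) (f y) = B x y := by
    have hBc : B.compl₁₂ (f : (Fin n → ℝ) × (Fin n → ℝ) →ₗ[ℝ] (Fin n → ℝ) × (Fin n → ℝ))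
        (f : (Fin n → ℝ) × (Fin n → ℝ) →ₗ[ℝ] (Fin n → ℝ) × (Fin n → ℝ)) = B := by
      apply LinearMap.BilinForm.ext_basis bW
      intro i j
      simpa using hkey i j
    intro x y
    conv_rhs => rw [← hBc]
    simp
  -- f maps V onto V'
  have hVspan : V = Submodule.span ℝ (Set.range fun i => ((bV i : ↥V) : (Fin n → ℝ) × (Fin n → ℝ))) := by
    conv_lhs => rw [show V = Submodule.map V.subtype ⊤ by
      rw [Submodule.map_top, Submodule.range_subtype], ← bV.span_eq]
    rw [Submodule.map_span, ← Set.range_comp]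
    rfl
  have hV'span : V' = Submodule.span ℝ
      (Set.range fun j => ((bV' j : ↥V') : (Fin n → ℝ) × (Fin n → ℝ))) := by
    conv_lhs => rw [show V' = Submodule.map V'.subtype ⊤ by
      rw [Submodule.map_top, Submodule.range_subtype], ← bV'.span_eq]
    rw [Submodule.map_span, ← Set.range_comp]
    rfl
  have hfV : V.map (f : (Fin n → ℝ) × (Fin n → ℝ) →ₗ[ℝ] (Fin n → ℝ) × (Fin n → ℝ)) = V' := by
    rw [hVspan, Submodule.map_span, ← Set.range_comp]
    have hr : (⇑(LinearEquiv.toLinearMap f) ∘ fun i => ((bV i : ↥V) : (Fin n → ℝ) × (Fin n → ℝ)))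
        = fun i => ((bV' (σ₁ i) : ↥V') : (Fin n → ℝ) × (Fin n → ℝ)) := by
      funext i
      show f ↑(bV i) = _
      rw [← hbWl, hfb]
      have h1 : σ (Sum.inl i) = Sum.inl (σ₁ i) := rfl
      rw [h1, hbW'l]
    rw [hr]
    have hrange : (Set.range fun i => ((bV' (σ₁ i) : ↥V') : (Fin n → ℝ) × (Fin n → ℝ)))
        = Set.range fun j => ((bV' j : ↥V') : (Fin n → ℝ) × (Fin n → ℝ)) :=
      Function.Surjective.range_comp σ₁.surjective
        (fun j => ((bV' j : ↥V') : (Fin n → ℝ) × (Fin n → ℝ)))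
    rw [hrange]
    exact hV'span.symm
  refine ⟨f, hiso, hfV, ?_⟩
  intro Γ _ hΓV
  set g := (f.toLinearMap.restrictScalars ℤ) with hgdef
  have hginj : Function.Injective g := fun x y hxy => f.injective hxy
  have hmapV : (V.restrictScalars ℤ).map g = V'.restrictScalars ℤ := by
    rw [← hfV]
    ext x
    simp only [Submodule.mem_map, Submodule.restrictScalars_mem, LinearMap.coe_restrictScalars,
      LinearEquiv.coe_coe, g]

  have hinter : (Γ.map g) ⊓ V'.restrictScalars ℤ = (Γ ⊓ V.restrictScalars ℤ).map g := by
    rw [← hmapV, (Submodule.map_inf g hginj).symm]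
  rw [hinter]
  rw [← LinearEquiv.finrank_eq (Submodule.equivMapOfInjective g hginj (Γ ⊓ V.restrictScalars ℤ)),
    hΓV, h_a]
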